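/- Let S be a numerical semigroup with multiplicity e. If Ap_3 = ∅ (no element of the Apéry set has order 3), then D_k + e = C_{k+1} for each k ≥ 2. -/
import Mathlib


open Set

/-- A numerical semigroup: a cofinite submonoid of ℕ. -/
def IsNumSgp (S : Set ℕ) : Prop :=
  0 ∈ S ∧ (∀ a ∈ S, ∀ b ∈ S, a + b ∈ S) ∧ Sᶜ.Finite

/-- The maximal ideal `M = S \ {0}`. -/
def MS (S : Set ℕ) : Set ℕ := S \ {0}

/-- The multiplicity `e` of `S`, the smallest nonzero element. -/
noncomputable def mult (S : Set ℕ) : ℕ := sInf (MS S)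

/-- `nM S h` is the set of sums of `h` elements of `M = S \ {0}` (with `nM S 0 = {0}`). -/
def nM (S : Set ℕ) : ℕ → Set ℕ
  | 0 => {0}
  | k + 1 => {x | ∃ a ∈ MS S, ∃ b ∈ nM S k, x = a + b}

/-- The order of `s`: the largest `h` with `s ∈ hM`. -/
noncomputable def ordS (S : Set ℕ) (s : ℕ) : ℕ := sSup {h | s ∈ nM S h}

/-- The Apéry set of `S` with respect to the multiplicity `e`:
elements `s ∈ S` with `s - e ∉ S`. -/
def Ap (S : Set ℕ) : Set ℕ := {s ∈ S | ∀ t ∈ S, t + mult S ≠ s}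

/-- Elements of the Apéry set of order `k`. -/
def ApK (S : Set ℕ) (k : ℕ) : Set ℕ := {s ∈ Ap S | ordS S s = k}

/-- `C_k = {s ∈ S : ord s = k and s - e ∉ (k-1)M}`. -/
def CK (S : Set ℕ) (k : ℕ) : Set ℕ :=
  {s ∈ S | ordS S s = k ∧ ∀ t ∈ nM S (k - 1), t + mult S ≠ s}

/-- `D_k = {s ∈ S : ord s = k-1 and ord (s+e) > k}`. -/
def DK (S : Set ℕ) (k : ℕ) : Set ℕ :=
  {s ∈ S | ordS S s = k - 1 ∧ k < ordS S (s + mult S)}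

/-- The Hilbert function of `R = k[[S]]`: `H(0) = 1`, `H(n) = |nM \ (n+1)M|`. -/
noncomputable def HF (S : Set ℕ) (n : ℕ) : ℕ := (nM S n \ nM S (n + 1)).ncard

/-- The set of minimal generators of `S`. -/
def MinGens (S : Set ℕ) : Set ℕ :=
  MS S \ {x | ∃ a ∈ MS S, ∃ b ∈ MS S, x = a + b}

/-- `a` is a maximal representation of `s`: a finitely supported coefficient
function on the minimal generators with `Σ aⱼ nⱼ = s` and `Σ aⱼ = ord s`. -/
def IsMaxRep (S : Set ℕ) (s : ℕ) (a : ℕ →₀ ℕ) : Prop :=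
  (↑a.support : Set ℕ) ⊆ MinGens S ∧
  (a.sum fun n c => c * n) = s ∧
  (a.sum fun _ c => c) = ordS S s

/-- `|Supp(s)|`: the maximal number of distinct minimal generators appearing
in a maximal representation of `s`. -/
noncomputable def SuppCard (S : Set ℕ) (s : ℕ) : ℕ :=
  sSup {q | ∃ a : ℕ →₀ ℕ, IsMaxRep S s a ∧ a.support.card = q}

/-- The Frobenius number of `S`. -/
noncomputable def Frob (S : Set ℕ) : ℕ := sSup Sᶜ

section AuxLemmas

variable {S : Set ℕ}

lemma msPos {a : ℕ} (ha : a ∈ MS S) : 0 < a :=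
  Nat.pos_of_ne_zero fun h => ha.2 (by simp [h])

lemma MS_nonempty (hS : IsNumSgp S) : (MS S).Nonempty := by
  obtain ⟨m, hm⟩ := hS.2.2.bddAbove
  have hmem : m + 1 ∈ S := by
    by_contra h
    have := hm (show m + 1 ∈ Sᶜ from h)
    omega
  exact ⟨m + 1, hmem, by simp⟩

lemma mult_memMS (hS : IsNumSgp S) : mult S ∈ MS S := Nat.sInf_mem (MS_nonempty hS)

lemma nM_subset (hS : IsNumSgp S) : ∀ h, nM S h ⊆ S := by
  intro h
  induction h with
  | zero =>
      intro x hx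
      simp only [nM, Set.mem_singleton_iff] at hx
      subst hx; exact hS.1
  | succ k ih =>
      rintro x ⟨a, ha, b, hb, rfl⟩
      exact hS.2.1 a ha.1 b (ih hb)

lemma nM_le {h s : ℕ} (hx : s ∈ nM S h) : h ≤ s := by
  induction h generalizing s with
  | zero => exact Nat.zero_le _
  | succ k ih =>
      obtain ⟨a, ha, b, hb, rfl⟩ := hx
      have h1 := ih hb
      have h2 := msPos ha
      omega

lemma nM_mul_le {h s : ℕ} (hx : s ∈ nM S h) : h * mult S ≤ s := by
  induction h generalizing s with
  | zero => simp
  | succ k ih =>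
      obtain ⟨a, ha, b, hb, rfl⟩ := hx
      have h1 := ih hb
      have h2 : mult S ≤ a := Nat.sInf_le ha
      have h3 : (k + 1) * mult S = k * mult S + mult S := by ring
      omega

lemma ord_bdd (s : ℕ) : BddAbove {h | s ∈ nM S h} := ⟨s, fun _ hh => nM_le hh⟩

lemma ord_nonempty {s : ℕ} (hs : s ∈ S) : {h | s ∈ nM S h}.Nonempty := by
  rcases eq_or_ne s 0 with rfl | h0
  · exact ⟨0, by simp [nM]⟩
  · exact ⟨1, ⟨s, ⟨hs, by simp [h0]⟩, 0, by simp [nM], (Nat.add_zero s).symm⟩⟩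

lemma ord_mem (hS : IsNumSgp S) {s : ℕ} (hs : s ∈ S) : s ∈ nM S (ordS S s) :=
  Nat.sSup_mem (ord_nonempty hs) (ord_bdd s)

lemma le_ord {h s : ℕ} (hx : s ∈ nM S h) : h ≤ ordS S s :=
  le_csSup (ord_bdd s) hx

lemma nM_decomp {i j s : ℕ} (hs : s ∈ nM S (i + j)) :
    ∃ u ∈ nM S i, ∃ r ∈ nM S j, s = u + r := by
  induction i generalizing s with
  | zero => exact ⟨0, by simp [nM], s, by simpa using hs, by simp⟩
  | succ k ih =>
      rw [Nat.succ_add] at hs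
      obtain ⟨a, ha, b, hb, rfl⟩ := hs
      obtain ⟨u, hu, r, hr, rfl⟩ := ih hb
      exact ⟨a + u, ⟨a, ha, u, hu, rfl⟩, r, hr, by ring⟩

lemma nM_succ_sub (hS : IsNumSgp S) {m : ℕ} (hm : 1 ≤ m) : nM S (m + 1) ⊆ nM S m := by
  obtain ⟨m, rfl⟩ : ∃ k, m = k + 1 := ⟨m - 1, by omega⟩
  rintro x ⟨a, ha, b, hb, rfl⟩
  obtain ⟨c, hc, d, hd, rfl⟩ := hb
  refine ⟨a + c, ⟨hS.2.1 a ha.1 c hc.1, ?_⟩, d, hd, by ring⟩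
  have := msPos ha
  simp only [Set.mem_singleton_iff]
  omega

lemma nM_mono (hS : IsNumSgp S) {j h : ℕ} (hj : 1 ≤ j) (hjh : j ≤ h) :
    nM S h ⊆ nM S j := by
  induction h with
  | zero => omega
  | succ k ih =>
      rcases Nat.eq_or_lt_of_le hjh with rfl | hlt
      · exact subset_rfl
      · exact fun x hx => ih (by omega) (nM_succ_sub hS (by omega) hx)

lemma noAp3 (hS : IsNumSgp S) (hAp3 : ApK S 3 = ∅) : ∀ x ∈ Ap S, ordS S x ≤ 2 := by
  intro x
  induction x using Nat.strong_induction_on with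
  | _ x ih =>
  intro hx
  by_contra h
  push_neg at h
  have h3 : ordS S x ≠ 3 := by
    intro he
    have : x ∈ ApK S 3 := ⟨hx, he⟩
    simp [hAp3] at this
  have h4 : 4 ≤ ordS S x := by omega
  have hmem : x ∈ nM S (ordS S x) := ord_mem hS hx.1
  obtain ⟨m, hm⟩ : ∃ m, ordS S x = 3 + (m + 1) := ⟨ordS S x - 4, by omega⟩
  rw [hm] at hmem
  obtain ⟨u, hu, r, hr, rfl⟩ := nM_decomp hmem
  have hrpos : 1 ≤ r := le_trans (by omega) (nM_le hr)
  have hrS : r ∈ S := nM_subset hS _ hr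
  have huAp : u ∈ Ap S := by
    refine ⟨nM_subset hS 3 hu, fun t ht hte => ?_⟩
    exact hx.2 (t + r) (hS.2.1 t ht r hrS) (by omega)
  have h5 := ih u (by omega) huAp
  have h6 := le_ord hu
  omega

lemma keyB (hS : IsNumSgp S) (hAp3 : ApK S 3 = ∅) {l s : ℕ} (hl : 3 ≤ l)
    (hs : s ∈ nM S l) : ∃ t ∈ nM S (l - 2), t + mult S = s := by
  obtain ⟨m, rfl⟩ : ∃ m, l = 3 + m := ⟨l - 3, by omega⟩
  obtain ⟨u, hu, r, hr, rfl⟩ := nM_decomp hs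
  by_cases hc : ∃ w ∈ S, w + mult S = u
  · obtain ⟨w, hw, hwe⟩ := hc
    have hu3 : 3 * mult S ≤ u := nM_mul_le hu
    have hepos : 0 < mult S := msPos (mult_memMS hS)
    have hwpos : w ≠ 0 := by omega
    refine ⟨w + r, ?_, by omega⟩
    have hmem : w + r ∈ nM S (m + 1) := ⟨w, ⟨hw, by simp [hwpos]⟩, r, hr, rfl⟩
    have : 3 + m - 2 = m + 1 := by omega
    rw [this]
    exact hmem
  · push_neg at hc
    have hu3 : u ∈ Ap S := ⟨nM_subset hS 3 hu, hc⟩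
    have h1 := noAp3 hS hAp3 u hu3
    have h2 := le_ord hu
    omega

end AuxLemmas

theorem stmt7 (S : Set ℕ) (hS : IsNumSgp S) (hAp3 : ApK S 3 = ∅)
    (k : ℕ) (hk : 2 ≤ k) :
    (fun s => s + mult S) '' DK S k = CK S (k + 1) := by
  ext s
  simp only [Set.mem_image]
  constructor
  · rintro ⟨d, ⟨hdS, hdord, hdgt⟩, rfl⟩
    have heS : mult S ∈ S := (mult_memMS hS).1
    have hsS : d + mult S ∈ S := hS.2.1 d hdS _ heS
    have hnotk : d ∉ nM S k := by
      intro hd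
      have := le_ord hd
      omega
    have hord : ordS S (d + mult S) = k + 1 := by
      by_contra hne
      have hl : k + 2 ≤ ordS S (d + mult S) := by omega
      obtain ⟨t, ht, hte⟩ := keyB hS hAp3 (show 3 ≤ ordS S (d + mult S) by omega)
        (ord_mem hS hsS)
      have htd : t = d := by omega
      subst htd
      exact hnotk (nM_mono hS (by omega) (by omega) ht)
    refine ⟨hsS, hord, fun t ht hte => ?_⟩
    have htd : t = d := by omega
    subst htd
    exact hnotk (by simpa using ht)
  · rintro ⟨hsS, hsord, hsC⟩
    have hmem : s ∈ nM S (k + 1) := hsord ▸ ord_mem hS hsS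
    obtain ⟨t, ht, hte⟩ := keyB hS hAp3 (show 3 ≤ k + 1 by omega) hmem
    have ht' : t ∈ nM S (k - 1) := by
      have : k + 1 - 2 = k - 1 := by omega
      rwa [this] at ht
    have htS : t ∈ S := nM_subset hS _ ht'
    have hnotk : t ∉ nM S k := fun h => hsC t (by simpa using h) hte
    have hordt : ordS S t = k - 1 := by
      have h1 : k - 1 ≤ ordS S t := le_ord ht'
      have h2 : ordS S t ≤ k - 1 := by
        by_contra h
        push_neg at h
        exact hnotk (nM_mono hS (by omega) (by omega) (ord_mem hS htS))
      omega
    refine ⟨t, ⟨htS, hordt, ?_⟩, hte⟩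
    rw [hte, hsord]
    omega
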